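/- Suppose S = ⟨C, ≺, g⟩ is a pseudo-distance on 𝒱 such that V |_S W = V | W for all V, W ⊆ 𝒱, where | is the modified Hamster-Wheel operator. Then g(v_m, w_m) ≺ g(v₁, w₁). -/
import Mathlib


/-- `lt` is a strict total order on `C`. -/
def StrictTotalOrder' {C : Type*} (lt : C → C → Prop) : Prop :=
  (∀ c, ¬ lt c c) ∧ (∀ a b c, lt a b → lt b c → lt a c) ∧
  (∀ a b, a ≠ b → lt a b ∨ lt b a)

/-- The operator induced by a pseudo-distance `⟨C, lt, d⟩`:
`V |_D W = {w ∈ W : ∃ v ∈ V, ∀ v' ∈ V, ∀ w' ∈ W, d(v,w) ⪯ d(v',w')}`. -/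
def inducedOp {𝒱 C : Type*} (lt : C → C → Prop) (d : 𝒱 → 𝒱 → C)
    (A B : Set 𝒱) : Set 𝒱 :=
  {w ∈ B | ∃ v ∈ A, ∀ v' ∈ A, ∀ w' ∈ B, lt (d v w) (d v' w') ∨ d v w = d v' w'}

/-- The elements `v 1, …, v m, w 1, …, w m` are `2m` pairwise distinct elements. -/
def hwDistinct {𝒱 : Type*} (m : ℕ) (v w : ℕ → 𝒱) : Prop :=
  (∀ i ∈ Set.Icc 1 m, ∀ j ∈ Set.Icc 1 m, v i ≠ w j) ∧
  (∀ i ∈ Set.Icc 1 m, ∀ j ∈ Set.Icc 1 m, v i = v j → i = j) ∧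
  (∀ i ∈ Set.Icc 1 m, ∀ j ∈ Set.Icc 1 m, w i = w j → i = j)

/-- `X = {v 1, …, v m, w 1, …, w m}`. -/
def hwX {𝒱 : Type*} (m : ℕ) (v w : ℕ → 𝒱) : Set 𝒱 :=
  {x | ∃ i ∈ Set.Icc 1 m, x = v i ∨ x = w i}

open Classical in
/-- The Hamster-Wheel pseudo-distance `d : 𝒱 × 𝒱 → ℝ`. -/
noncomputable def hwD {𝒱 : Type*} (m : ℕ) (v w : ℕ → 𝒱) (a b : 𝒱) : ℝ :=
  if a = b then 0
  else if ¬ (({a, b} : Set 𝒱) ⊆ hwX m v w) then 1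
  else if (∃ i ∈ Set.Icc 1 m, ∃ j ∈ Set.Icc 1 m, a = v i ∧ b = v j) ∨
      (∃ i ∈ Set.Icc 1 m, ∃ j ∈ Set.Icc 1 m, a = w i ∧ b = w j) then 1.1
  else if ∃ i ∈ Set.Icc 1 m, ({a, b} : Set 𝒱) = {v i, w i} then 1.4
  else if ∃ i ∈ Set.Icc 1 m, ∃ j ∈ Set.Icc 1 m,
      ({a, b} : Set 𝒱) = {v i, w j} ∧ ((i : ℤ) - j).natAbs ∈ ({1, m - 1} : Set ℕ) then 2
  else 1.2

open Classical in
/-- The modified Hamster-Wheel operator `|` on `𝒫(𝒱)`. -/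
noncomputable def hwOp {𝒱 : Type*} (m : ℕ) (v w : ℕ → 𝒱) (A B : Set 𝒱) : Set 𝒱 :=
  if A = ({v m, v 1} : Set 𝒱) ∧ B = ({w m, w 1} : Set 𝒱) then {w m}
  else if A = ({w m, w 1} : Set 𝒱) ∧ B = ({v m, v 1} : Set 𝒱) then {v m}
  else inducedOp (· < ·) (hwD m v w) A B

lemma hwD_vw {𝒱 : Type*} {m : ℕ} (hm : 4 ≤ m) {v w : ℕ → 𝒱}
    (hdist : hwDistinct m v w) {i j : ℕ} (hi : i ∈ Set.Icc 1 m) (hj : j ∈ Set.Icc 1 m) :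
    hwD m v w (v i) (w j) =
      if i = j then 1.4
      else if ((i : ℤ) - j).natAbs ∈ ({1, m - 1} : Set ℕ) then 2 else 1.2 := by
  obtain ⟨hvw, hvv, hww⟩ := hdist
  unfold hwD
  have hsub : ({v i, w j} : Set 𝒱) ⊆ hwX m v w := by
    intro x hx
    simp only [Set.mem_insert_iff, Set.mem_singleton_iff] at hx
    rcases hx with rfl | rfl
    · exact ⟨i, hi, Or.inl rfl⟩
    · exact ⟨j, hj, Or.inr rfl⟩
  have hno : ¬ ((∃ i' ∈ Set.Icc 1 m, ∃ j' ∈ Set.Icc 1 m, v i = v i' ∧ w j = v j') ∨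
      (∃ i' ∈ Set.Icc 1 m, ∃ j' ∈ Set.Icc 1 m, v i = w i' ∧ w j = w j')) := by
    rintro (⟨i', hi', j', hj', -, h2⟩ | ⟨i', hi', j', hj', h1, -⟩)
    · exact hvw j' hj' j hj h2.symm
    · exact hvw i hi i' hi' h1
  have hpair : ∀ k ∈ Set.Icc 1 m, ∀ l ∈ Set.Icc 1 m,
      ({v i, w j} : Set 𝒱) = {v k, w l} → i = k ∧ j = l := by
    intro k hk l hl hset
    have h1 : v i ∈ ({v k, w l} : Set 𝒱) := hset ▸ Set.mem_insert _ _
    have h2 : w j ∈ ({v k, w l} : Set 𝒱) := hset ▸ Set.mem_insert_of_mem _ rfl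
    simp only [Set.mem_insert_iff, Set.mem_singleton_iff] at h1 h2
    rcases h1 with h1 | h1
    · rcases h2 with h2 | h2
      · exact absurd h2.symm (hvw k hk j hj)
      · exact ⟨hvv i hi k hk h1, hww j hj l hl h2⟩
    · exact absurd h1 (hvw i hi l hl)
  rw [if_neg (hvw i hi j hj), if_neg (not_not_intro hsub), if_neg hno]
  by_cases hij : i = j
  · subst hij
    rw [if_pos ⟨i, hi, rfl⟩, if_pos rfl]
  · rw [if_neg, if_neg hij]
    · by_cases habs : ((i : ℤ) - j).natAbs ∈ ({1, m - 1} : Set ℕ)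
      · rw [if_pos ⟨i, hi, j, hj, rfl, habs⟩, if_pos habs]
      · rw [if_neg, if_neg habs]
        rintro ⟨i', hi', j', hj', hset, habs'⟩
        obtain ⟨rfl, rfl⟩ := hpair i' hi' j' hj' hset
        exact habs habs'
    · rintro ⟨k, hk, hset⟩
      obtain ⟨rfl, rfl⟩ := hpair k hk k hk hset
      exact hij rfl

/-- If a pseudo-distance `⟨C, lt, g⟩` induces the modified Hamster-Wheel operator, then
`g(v_m, w_m) ≺ g(v_1, w_1)`. -/
theorem stmt6 {𝒱 : Type*} (m : ℕ) (hm : 4 ≤ m) (v w : ℕ → 𝒱)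
    (hdist : hwDistinct m v w)
    {C : Type*} (lt : C → C → Prop) (g : 𝒱 → 𝒱 → C)
    (hne : Nonempty C) (hsto : StrictTotalOrder' lt)
    (heq : ∀ A B : Set 𝒱, inducedOp lt g A B = hwOp m v w A B) :
    lt (g (v m) (w m)) (g (v 1) (w 1)) := by
  obtain ⟨hvw, hvv, hww⟩ := hdist
  obtain ⟨hirr, htrans, htot⟩ := hsto
  have h1m : (1 : ℕ) ∈ Set.Icc 1 m := Set.mem_Icc.mpr ⟨le_refl 1, by omega⟩
  have hmm : m ∈ Set.Icc 1 m := Set.mem_Icc.mpr ⟨by omega, le_refl m⟩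
  have hv1m : v 1 ≠ v m := fun h => by have := hvv 1 h1m m hmm h; omega
  have hw1m : w 1 ≠ w m := fun h => by have := hww 1 h1m m hmm h; omega
  set a := g (v m) (w m) with ha
  set b := g (v m) (w 1) with hb
  set c := g (v 1) (w m) with hc
  set e := g (v 1) (w 1) with he
  have hd : hwDistinct m v w := ⟨hvw, hvv, hww⟩
  have dmm : hwD m v w (v m) (w m) = 1.4 := by
    rw [hwD_vw hm hd hmm hmm, if_pos rfl]
  have d11 : hwD m v w (v 1) (w 1) = 1.4 := by
    rw [hwD_vw hm hd h1m h1m, if_pos rfl]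
  have d1m : hwD m v w (v 1) (w m) = 2 := by
    rw [hwD_vw hm hd h1m hmm, if_neg (by omega), if_pos]
    simp only [Set.mem_insert_iff, Set.mem_singleton_iff]
    omega
  have dm1 : hwD m v w (v m) (w 1) = 2 := by
    rw [hwD_vw hm hd hmm h1m, if_neg (by omega), if_pos]
    simp only [Set.mem_insert_iff, Set.mem_singleton_iff]
    omega
  -- E2 : operator on {v 1}, {w m, w 1} gives lt e c
  have hopA2 : ¬ (({v 1} : Set 𝒱) = {v m, v 1} ∧ ({w m, w 1} : Set 𝒱) = {w m, w 1}) := by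
    rintro ⟨h1, -⟩
    have : v m ∈ ({v 1} : Set 𝒱) := h1 ▸ Set.mem_insert _ _
    exact hv1m (Set.mem_singleton_iff.mp this).symm
  have hopB2 : ¬ (({v 1} : Set 𝒱) = {w m, w 1} ∧ ({w m, w 1} : Set 𝒱) = {v m, v 1}) := by
    rintro ⟨h1, -⟩
    have : w m ∈ ({v 1} : Set 𝒱) := h1 ▸ Set.mem_insert _ _
    exact hvw 1 h1m m hmm (Set.mem_singleton_iff.mp this).symm
  have hop2 : hwOp m v w {v 1} {w m, w 1} = inducedOp (· < ·) (hwD m v w) {v 1} {w m, w 1} := by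
    unfold hwOp
    rw [if_neg hopA2, if_neg hopB2]
  have hwm_not : w m ∉ inducedOp (· < ·) (hwD m v w) {v 1} {w m, w 1} := by
    rintro ⟨-, v', hv', hall⟩
    have hv'1 : v' = v 1 := Set.mem_singleton_iff.mp hv'
    subst hv'1
    have := hall (v 1) rfl (w 1) (Set.mem_insert_of_mem _ rfl)
    rw [d1m, d11] at this
    rcases this with h | h <;> norm_num at h
  have hwm_not' : w m ∉ inducedOp lt g {v 1} {w m, w 1} := by
    rw [heq, hop2]; exact hwm_not
  have hec : lt e c := by
    by_contra hce
    apply hwm_not'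
    have hce' : lt c e ∨ c = e := by
      rcases eq_or_ne c e with h | h
      · exact Or.inr h
      · rcases htot c e h with h' | h'
        · exact Or.inl h'
        · exact absurd h' hce
    refine ⟨Set.mem_insert _ _, v 1, rfl, ?_⟩
    intro v' hv' w' hw'
    have hv'1 : v' = v 1 := Set.mem_singleton_iff.mp hv'
    subst hv'1
    simp only [Set.mem_insert_iff, Set.mem_singleton_iff] at hw'
    rcases hw' with rfl | rfl
    · exact Or.inr rfl
    · exact hce'
  -- E3 : operator on {v m}, {w m, w 1} gives lt a b
  have hopA3 : ¬ (({v m} : Set 𝒱) = {v m, v 1} ∧ ({w m, w 1} : Set 𝒱) = {w m, w 1}) := by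
    rintro ⟨h1, -⟩
    have : v 1 ∈ ({v m} : Set 𝒱) := h1 ▸ Set.mem_insert_of_mem _ rfl
    exact hv1m (Set.mem_singleton_iff.mp this)
  have hopB3 : ¬ (({v m} : Set 𝒱) = {w m, w 1} ∧ ({w m, w 1} : Set 𝒱) = {v m, v 1}) := by
    rintro ⟨h1, -⟩
    have : w m ∈ ({v m} : Set 𝒱) := h1 ▸ Set.mem_insert _ _
    exact hvw m hmm m hmm (Set.mem_singleton_iff.mp this).symm
  have hop3 : hwOp m v w {v m} {w m, w 1} = inducedOp (· < ·) (hwD m v w) {v m} {w m, w 1} := by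
    unfold hwOp
    rw [if_neg hopA3, if_neg hopB3]
  have hw1_not : w 1 ∉ inducedOp (· < ·) (hwD m v w) {v m} {w m, w 1} := by
    rintro ⟨-, v', hv', hall⟩
    have hv'm : v' = v m := Set.mem_singleton_iff.mp hv'
    subst hv'm
    have := hall (v m) rfl (w m) (Set.mem_insert _ _)
    rw [dm1, dmm] at this
    rcases this with h | h <;> norm_num at h
  have hw1_not' : w 1 ∉ inducedOp lt g {v m} {w m, w 1} := by
    rw [heq, hop3]; exact hw1_not
  have hab : lt a b := by
    by_contra hba
    apply hw1_not'
    have hba' : lt b a ∨ b = a := by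
      rcases eq_or_ne b a with h | h
      · exact Or.inr h
      · rcases htot b a h with h' | h'
        · exact Or.inl h'
        · exact absurd h' hba
    refine ⟨Set.mem_insert_of_mem _ rfl, v m, rfl, ?_⟩
    intro v' hv' w' hw'
    have hv'm : v' = v m := Set.mem_singleton_iff.mp hv'
    subst hv'm
    simp only [Set.mem_insert_iff, Set.mem_singleton_iff] at hw'
    rcases hw' with rfl | rfl
    · exact hba'
    · exact Or.inr rfl
  -- E1 : the special case
  have hE1 : inducedOp lt g {v m, v 1} {w m, w 1} = ({w m} : Set 𝒱) := by
    rw [heq]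
    unfold hwOp
    rw [if_pos ⟨rfl, rfl⟩]
  have hwm_mem : w m ∈ inducedOp lt g {v m, v 1} {w m, w 1} := by
    rw [hE1]; exact rfl
  obtain ⟨-, v₀, hv₀, hall⟩ := hwm_mem
  simp only [Set.mem_insert_iff, Set.mem_singleton_iff] at hv₀
  rcases hv₀ with rfl | rfl
  · -- v₀ = v m, so a ⪯ everything
    have hae : lt a e ∨ a = e :=
      hall (v 1) (Set.mem_insert_of_mem _ rfl) (w 1) (Set.mem_insert_of_mem _ rfl)
    rcases hae with h | h
    · exact h
    · exfalso
      have hw1_mem : w 1 ∈ inducedOp lt g {v m, v 1} {w m, w 1} := by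
        refine ⟨Set.mem_insert_of_mem _ rfl, v 1, Set.mem_insert_of_mem _ rfl, ?_⟩
        intro v' hv' w' hw'
        simp only [Set.mem_insert_iff, Set.mem_singleton_iff] at hv' hw'
        rcases hv' with rfl | rfl <;> rcases hw' with rfl | rfl
        · exact Or.inr h.symm
        · show lt e b ∨ e = b
          rw [← h]; exact Or.inl hab
        · exact Or.inl hec
        · exact Or.inr rfl
      rw [hE1] at hw1_mem
      exact hw1m (Set.mem_singleton_iff.mp hw1_mem)
  · -- v₀ = v 1 : contradiction with lt e c
    exfalso
    have hce : lt c e ∨ c = e :=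
      hall (v 1) (Set.mem_insert_of_mem _ rfl) (w 1) (Set.mem_insert_of_mem _ rfl)
    rcases hce with h | h
    · exact hirr c (htrans c e c h hec)
    · exact hirr e (h ▸ hec)
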